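/- arXiv:1704.08645 — 2 statements merged into one kernel-verified Lean document; each statement's English description precedes it below -/
import Mathlib

section
/- Let x ≥ 2, λ = λ(x) = (x+√(x²+4))/2, λ̄ = λ̄(x) = (x−√(x²+4))/2. Suppose positive reals c_0, c_1 satisfy c_1 ≥ x·c_0 and c_1 > c_0, and set A = (c_1 − λ̄c_0)/(λ−λ̄), B = (λc_0 − c_1)/(λ−λ̄). Then for every ℓ ≥ 1, |B·λ̄^ℓ / (A·λ^ℓ)| ≤ 2|λ̄(2)|, where λ̄(2) = 1 − √2. -/
set_option maxHeartbeats 1000000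


/-- the subdominant term in the solution of the recursion is uniformly negligible:
`|B λ̄^ℓ / (A λ^ℓ)| ≤ 2|λ̄(2)|` for all `ℓ ≥ 1`, where `λ̄(2) = 1 - √2`. -/
theorem stmt_5 (x : ℝ) (hx : 2 ≤ x) (lam lamb A B c0 c1 : ℝ)
    (hlam : lam = (x + Real.sqrt (x ^ 2 + 4)) / 2)
    (hlamb : lamb = (x - Real.sqrt (x ^ 2 + 4)) / 2)
    (hc0 : 0 < c0) (hc1 : 0 < c1) (h1 : x * c0 ≤ c1) (h2 : c0 < c1)
    (hA : A = (c1 - lamb * c0) / (lam - lamb))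
    (hB : B = (lam * c0 - c1) / (lam - lamb)) :
    ∀ ℓ : ℕ, 1 ≤ ℓ → |B * lamb ^ ℓ / (A * lam ^ ℓ)| ≤ 2 * |1 - Real.sqrt 2| := by
  intro ℓ hℓ
  set s := Real.sqrt (x ^ 2 + 4) with hsdef
  have hs0 : 0 ≤ s := Real.sqrt_nonneg _
  have hs2 : s ^ 2 = x ^ 2 + 4 := Real.sq_sqrt (by positivity)
  have hsx : x < s := by nlinarith
  set q := Real.sqrt 2 with hqdef
  have hq0 : 0 ≤ q := Real.sqrt_nonneg _
  have hq2 : q ^ 2 = 2 := Real.sq_sqrt (by norm_num)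
  have hq1 : 1 < q := by nlinarith
  have hq2' : q < 2 := by nlinarith
  have habs : |1 - q| = q - 1 := by
    rw [abs_sub_comm]; exact abs_of_pos (by linarith)
  have hlam1 : 1 < lam := by rw [hlam]; nlinarith
  have hlamb_neg : lamb < 0 := by rw [hlamb]; linarith
  have hsb : 0 < s + (x + 2 * q - 2) := by nlinarith
  have hsle : s ≤ x + 2 * q - 2 := by
    by_contra h
    push_neg at h
    nlinarith [mul_pos (by linarith : (0:ℝ) < s - (x + 2 * q - 2)) hsb]
  have hlamb_abs : |lamb| ≤ q - 1 := by
    rw [abs_of_nonpos hlamb_neg.le, hlamb]; linarith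
  have hdiff : lam - lamb = s := by rw [hlam, hlamb]; ring
  have hspos : 0 < s := by linarith
  have hApos : 0 < A := by
    rw [hA, hdiff]
    exact div_pos (by nlinarith) hspos
  have hsum : lam + lamb = x := by rw [hlam, hlamb]; ring
  have hBA : |B| ≤ A := by
    rw [hA, hB, hdiff, abs_div, abs_of_pos hspos]
    have h3 : lamb * c0 ≤ lam * c0 :=
      mul_le_mul_of_nonneg_right (by linarith) hc0.le
    have h4 : lam * c0 + lamb * c0 = x * c0 := by rw [← add_mul, hsum]
    have hnum : |lam * c0 - c1| ≤ c1 - lamb * c0 := by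
      rw [abs_le]; constructor
      · linarith
      · linarith
    gcongr
  have hlampow : 1 ≤ lam ^ ℓ := one_le_pow₀ hlam1.le
  have hlambpow : |lamb| ^ ℓ ≤ q - 1 := by
    calc |lamb| ^ ℓ ≤ (q - 1) ^ ℓ := pow_le_pow_left₀ (abs_nonneg _) hlamb_abs ℓ
    _ ≤ q - 1 := pow_le_of_le_one (by linarith) (by linarith) (by omega)
  rw [abs_div, abs_mul, abs_mul, abs_pow, abs_pow, abs_of_pos hApos,
    abs_of_pos (by linarith : (0:ℝ) < lam), habs]
  rw [div_le_iff₀ (by positivity)]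
  have hkey : |B| * |lamb| ^ ℓ ≤ A * (q - 1) :=
    mul_le_mul hBA hlambpow (by positivity) hApos.le
  have hAq : 0 < A * (q - 1) := mul_pos hApos (by linarith)
  calc |B| * |lamb| ^ ℓ ≤ A * (q - 1) := hkey
    _ ≤ 2 * (q - 1) * (A * lam ^ ℓ) := by
        have h5 := mul_le_mul_of_nonneg_left hlampow hAq.le
        nlinarith [h5, hAq]
end

section
/- Let φ : [0,∞) → Δ² be a function, γ : ℝ → Δ² continuous, (t_j) a sequence with (γ(t_j)) dense in γ(ℝ), (ε_j) decreasing to 0, and (S_k) an increasing unbounded sequence in [0,∞). Suppose that for all k ≥ 2 and all t ∈ [S_{k-1}, S_k), |φ(t) − γ(t_k)|₁ ≤ 33·ε_k (ℓ¹-norm on ℝ³). Then the set of accumulation points of φ(t) as t → ∞ equals the closure of γ(ℝ) in Δ². -/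
open Filter Topology

lemma stmt15_l1 (x y : Fin 3 → ℝ) : dist x y ≤ ∑ i, |x i - y i| := by
  refine (dist_pi_le_iff (Finset.sum_nonneg fun i _ => abs_nonneg _)).mpr fun i => ?_
  rw [Real.dist_eq]
  exact Finset.single_le_sum (fun i _ => abs_nonneg (x i - y i)) (Finset.mem_univ i)

lemma stmt15_tail_dense (γ : ℝ → (Fin 3 → ℝ)) (hcont : Continuous γ) (t : ℕ → ℝ)
    (hdense : Set.range γ ⊆ closure (Set.range fun j => γ (t j)))
    (P : Fin 3 → ℝ) (hP : P ∈ closure (Set.range γ)) :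
    ∀ m : ℕ, ∀ r : ℝ, 0 < r → ∃ j, m ≤ j ∧ dist (γ (t j)) P < r := by
  intro m r hr
  by_cases hconst : ∀ u : ℝ, γ u = γ 0
  · have hrange : Set.range γ ⊆ {γ 0} := by rintro _ ⟨u, rfl⟩; simp [hconst u]
    have hPc : P = γ 0 := by
      have := (closure_minimal hrange isClosed_singleton) hP
      simpa using this
    exact ⟨m, le_refl m, by simp [hconst (t m), hPc, hr]⟩
  · push_neg at hconst
    obtain ⟨x, hx⟩ := hconst
    set g : ℝ → ℝ := fun u => dist (γ u) P with hg
    have hgc : Continuous g := hcont.dist continuous_const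
    have hJ : Set.OrdConnected (Set.range g) := by
      have : IsPreconnected (Set.range g) := by
        rw [← Set.image_univ]
        exact isPreconnected_univ.image g hgc.continuousOn
      exact this.ordConnected
    set d : ℝ := max (g x) (g 0) with hd
    have hdJ : d ∈ Set.range g := by
      rcases max_cases (g x) (g 0) with ⟨h, _⟩ | ⟨h, _⟩ <;> rw [hd, h]
      exacts [⟨x, rfl⟩, ⟨0, rfl⟩]
    have hd0 : 0 < d := by
      rcases lt_or_ge 0 d with h | h
      · exact h
      · have h1 : g x = 0 := le_antisymm ((le_max_left _ _).trans h) dist_nonneg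
        have h2 : g 0 = 0 := le_antisymm ((le_max_right _ _).trans h) dist_nonneg
        exact absurd ((dist_eq_zero.mp h1).trans (dist_eq_zero.mp h2).symm) hx
    set ρ : ℝ := min r d with hρdef
    have hρ : 0 < ρ := lt_min hr hd0
    set η : ℝ := ρ / (10 * (m + 2)) with hη
    have hη0 : 0 < η := by rw [hη]; positivity
    set a : ℕ → ℝ := fun i => 5 * η * (i + 1) with ha
    have hρη : ρ = 10 * ((m : ℝ) + 2) * η := by
      rw [hη]; field_simp
    have ha0 : 0 < a 0 := by simp only [ha]; positivity
    have hamono : ∀ i i' : ℕ, i ≤ i' → a i ≤ a i' := by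
      intro i i' hii
      have h1 : (i : ℝ) ≤ i' := by exact_mod_cast hii
      simp only [ha]
      nlinarith [hη0]
    have haρ : ∀ i : ℕ, i ≤ m → a i + η ≤ ρ := by
      intro i hi
      have h1 : (i : ℝ) ≤ m := by exact_mod_cast hi
      rw [hρη]; simp only [ha]; nlinarith [hη0]
    obtain ⟨q, hqmem, hq⟩ := Metric.mem_closure_iff.mp hP (a 0) ha0
    obtain ⟨uq, rfl⟩ := hqmem
    have hv : g uq < a 0 := by
      show dist (γ uq) P < a 0
      rw [dist_comm]; exact hq
    have haJ : ∀ i : ℕ, i ≤ m → a i ∈ Set.range g := by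
      intro i hi
      apply hJ.out ⟨uq, rfl⟩ hdJ
      refine ⟨hv.le.trans (hamono 0 i (Nat.zero_le i)), ?_⟩
      have h1 : a i + η ≤ ρ := haρ i hi
      have h2 : ρ ≤ d := min_le_right r d
      linarith
    have hH : ∀ i : ℕ, ∃ jj : ℕ, i ≤ m →
        a i - η < dist (γ (t jj)) P ∧ dist (γ (t jj)) P < a i + η := by
      intro i
      by_cases hi : i ≤ m
      · obtain ⟨u, hu⟩ := haJ i hi
        obtain ⟨b, hbmem, hb⟩ := Metric.mem_closure_iff.mp (hdense ⟨u, rfl⟩) η hη0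
        obtain ⟨jj, rfl⟩ := hbmem
        refine ⟨jj, fun _ => ?_⟩
        have htri : |dist (γ (t jj)) P - dist (γ u) P| ≤ dist (γ (t jj)) (γ u) :=
          abs_dist_sub_le _ _ _
        rw [dist_comm] at hb
        have hgu : dist (γ u) P = a i := hu
        rw [hgu] at htri
        have h2 := abs_lt.mp (htri.trans_lt hb)
        exact ⟨by linarith [h2.1], by linarith [h2.2]⟩
      · exact ⟨0, fun h => absurd h hi⟩
    choose jf hjf using hH
    have hgap : ∀ i i' : ℕ, i < i' → 5 * η ≤ a i' - a i := by
      intro i i' hii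
      have h1 : (i : ℝ) + 1 ≤ i' := by exact_mod_cast hii
      simp only [ha]
      nlinarith [hη0]
    have hinj : Set.InjOn jf (Finset.range (m + 1)) := by
      intro i hi i' hi' he
      simp only [Finset.coe_range, Set.mem_Iio] at hi hi'
      by_contra hne
      have him : i ≤ m := Nat.lt_succ_iff.mp hi
      have him' : i' ≤ m := Nat.lt_succ_iff.mp hi'
      have h1 := hjf i him
      have h2 := hjf i' him'
      rw [he] at h1
      rcases Nat.lt_or_ge i i' with hlt | hge
      · have := hgap i i' hlt
        linarith [h1.1, h1.2, h2.1, h2.2, hη0]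
      · have hlt : i' < i := lt_of_le_of_ne hge fun h => hne h.symm
        have := hgap i' i hlt
        linarith [h1.1, h1.2, h2.1, h2.2, hη0]
    have hpig : ∃ i, i ≤ m ∧ m ≤ jf i := by
      by_contra hc
      push_neg at hc
      have hmaps : ∀ i ∈ Finset.range (m + 1), jf i ∈ Finset.range m := by
        intro i hi
        exact Finset.mem_range.mpr (hc i (Nat.lt_succ_iff.mp (Finset.mem_range.mp hi)))
      have := Finset.card_le_card_of_injOn jf hmaps hinj
      simp at this
    obtain ⟨i, him, hjfi⟩ := hpig
    refine ⟨jf i, hjfi, ?_⟩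
    have h1 := (hjf i him).2
    have h2 : a i + η ≤ ρ := haρ i him
    have h3 : ρ ≤ r := min_le_left r d
    linarith

/-- if `φ(t)` is `33 ε k`-close (in ℓ¹) to `γ (t k)` on `[S (k-1), S k)`
for a sequence `(γ (t k))` dense in `γ(ℝ)` and `ε k → 0`, then the accumulation set of `φ`
as `t → ∞` is exactly the closure of `γ(ℝ)`. -/
theorem stmt_15 (φ : ℝ → (Fin 3 → ℝ)) (γ : ℝ → (Fin 3 → ℝ)) (hcont : Continuous γ)
    (t : ℕ → ℝ) (hdense : Set.range γ ⊆ closure (Set.range fun j => γ (t j)))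
    (ε : ℕ → ℝ) (hεpos : ∀ j, 0 < ε j) (hεanti : Antitone ε)
    (hεlim : Tendsto ε atTop (nhds 0))
    (S : ℕ → ℝ) (hS0 : ∀ k, 0 ≤ S k) (hSmono : StrictMono S)
    (hSunb : Tendsto S atTop atTop)
    (hφΔ : ∀ u : ℝ, 0 ≤ u → φ u ∈ stdSimplex ℝ (Fin 3))
    (hγΔ : ∀ u : ℝ, γ u ∈ stdSimplex ℝ (Fin 3))
    (happrox : ∀ k : ℕ, 2 ≤ k → ∀ u : ℝ, S (k - 1) ≤ u → u < S k →
      ∑ i, |φ u i - γ (t k) i| ≤ 33 * ε k) :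
    {P : Fin 3 → ℝ | ∃ s : ℕ → ℝ, Tendsto s atTop atTop ∧
        Tendsto (fun n => φ (s n)) atTop (nhds P)} = closure (Set.range γ) := by
  ext P
  simp only [Set.mem_setOf_eq]
  constructor
  · rintro ⟨s, hs, hφP⟩
    rw [Metric.mem_closure_iff]
    intro δ hδ
    obtain ⟨N0, hN0⟩ := (hεlim.eventually
      (gt_mem_nhds (show (0:ℝ) < δ / 66 by linarith))).exists_forall_of_atTop
    set N := max N0 1 with hN
    have hev1 : ∀ᶠ n in atTop, dist (φ (s n)) P < δ / 2 :=
      (Metric.tendsto_nhds.mp hφP) (δ / 2) (by linarith)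
    have hev2 : ∀ᶠ n in atTop, S N ≤ s n := hs.eventually_ge_atTop (S N)
    obtain ⟨n, hn1, hn2⟩ := (hev1.and hev2).exists
    have hex : ∃ k, s n < S k := (hSunb.eventually_gt_atTop (s n)).exists
    set k := Nat.find hex with hk
    have hklt : s n < S k := Nat.find_spec hex
    have hkN : N < k := by
      by_contra hc
      push_neg at hc
      exact absurd (lt_of_le_of_lt hn2 hklt).trans_le (by
        exact fun h => absurd (h (hSmono.monotone hc)) (lt_irrefl _))
    have hk2 : 2 ≤ k := by
      have : 1 ≤ N := le_max_right N0 1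
      omega
    have hkm1 : S (k - 1) ≤ s n := by
      have hlt : k - 1 < k := by omega
      have := Nat.find_min hex hlt
      push_neg at this
      exact this
    have hsum := happrox k hk2 (s n) hkm1 hklt
    have hdist : dist (φ (s n)) (γ (t k)) ≤ 33 * ε k :=
      (stmt15_l1 _ _).trans hsum
    have hεk : ε k < δ / 66 := by
      have h1 : N0 ≤ k := le_trans (le_trans (le_max_left N0 1) hkN.le) (le_refl k)
      exact lt_of_le_of_lt (hεanti h1) (hN0 N0 (le_refl N0))
    refine ⟨γ (t k), ⟨t k, rfl⟩, ?_⟩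
    calc dist P (γ (t k)) ≤ dist P (φ (s n)) + dist (φ (s n)) (γ (t k)) := dist_triangle _ _ _
      _ < δ / 2 + 33 * ε k :=
        add_lt_add_of_lt_of_le (by rw [dist_comm]; exact hn1) hdist
      _ ≤ δ := by linarith
  · intro hP
    have htail := stmt15_tail_dense γ hcont t hdense P hP
    have hch : ∀ n : ℕ, ∃ j : ℕ, n + 2 ≤ j ∧ dist (γ (t j)) P < 1 / (n + 1) := fun n =>
      htail (n + 2) (1 / (n + 1)) (by positivity)
    choose j hj1 hj2 using hch
    refine ⟨fun n => S (j n - 1), ?_, ?_⟩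
    · exact tendsto_atTop_mono
        (fun n => hSmono.monotone (show n + 1 ≤ j n - 1 by have := hj1 n; omega))
        (hSunb.comp (tendsto_add_atTop_nat 1))
    · rw [tendsto_iff_dist_tendsto_zero]
      refine squeeze_zero (fun n => dist_nonneg)
        (g := fun n => 33 * ε (n + 2) + 1 / (n + 1)) (fun n => ?_) ?_
      · have hk2 : 2 ≤ j n := by have := hj1 n; omega
        have hlt : S (j n - 1) < S (j n) := hSmono (by omega)
        have hsum := happrox (j n) hk2 (S (j n - 1)) le_rfl hlt
        have hd1 : dist (φ (S (j n - 1))) (γ (t (j n))) ≤ 33 * ε (j n) :=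
          (stmt15_l1 _ _).trans hsum
        have hd2 : ε (j n) ≤ ε (n + 2) := hεanti (hj1 n)
        calc dist (φ (S (j n - 1))) P
            ≤ dist (φ (S (j n - 1))) (γ (t (j n))) + dist (γ (t (j n))) P :=
              dist_triangle _ _ _
          _ ≤ 33 * ε (n + 2) + 1 / (n + 1) := by
              have := hj2 n
              linarith
      · have l1 : Tendsto (fun n : ℕ => ε (n + 2)) atTop (nhds 0) :=
          hεlim.comp (tendsto_add_atTop_nat 2)
        have l2 := (l1.const_mul 33).add tendsto_one_div_add_atTop_nhds_zero_nat
        simpa using l2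
end
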